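/- For x ∈ pZ_p \ F, the Birkhoff sums of log φ telescope: Σ_{k=0}^{n−1} log φ(T_p^k x) = −log|x − p_{n+1}(x)/q_{n+1}(x)|_p + log|x − p_1(x)/q_1(x)|_p, where p_m/q_m denotes the m-th Schneider convergent. Consequently lim_n (1/n)Σ_{k=0}^{n−1} log φ(T_p^k x) = −lim_n (1/n) log|x − p_n(x)/q_n(x)|_p whenever either limit exists. -/

import Mathlib

open Classical in
/-- The first Schneider digit `b₁(x) ∈ {1,…,p−1}`: the unique `b` with
`b ≡ p^{v_p(x)}/x (mod p)`. -/
noncomputable def schneiderDigit (p : ℕ) [Fact p.Prime] (x : ℚ_[p]) : ℕ :=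
  if h : ∃ b : ℕ, 1 ≤ b ∧ b ≤ p - 1 ∧
      ‖(p : ℚ_[p]) ^ x.valuation / x - (b : ℚ_[p])‖ < 1
  then h.choose else 0

open Classical in
/-- The Schneider map `T_p`. -/
noncomputable def schneiderMap (p : ℕ) [Fact p.Prime] (x : ℚ_[p]) : ℚ_[p] :=
  if x = 0 then 0
  else (p : ℚ_[p]) ^ x.valuation / x - (schneiderDigit p x : ℚ_[p])

/-- The `n`-th Schneider convergent `p_n(x)/q_n(x)`, obtained by truncating the
Schneider continued fraction of `x` after `n` levels. -/
noncomputable def schneiderConv (p : ℕ) [Fact p.Prime] : ℕ → ℚ_[p] → ℚ_[p]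
  | 0, _ => 0
  | n + 1, x => (p : ℚ_[p]) ^ x.valuation /
      ((schneiderDigit p x : ℚ_[p]) + schneiderConv p n (schneiderMap p x))

/-- `φ(x) = ‖x − p₂(x)/q₂(x)‖⁻¹ / ‖x − p₁(x)/q₁(x)‖⁻¹`. -/
noncomputable def schneiderPhiConv (p : ℕ) [Fact p.Prime] (x : ℚ_[p]) : ℝ :=
  ‖x - schneiderConv p 2 x‖⁻¹ / ‖x - schneiderConv p 1 x‖⁻¹

section Aux
variable (p : ℕ) [hp : Fact p.Prime]

lemma natCast_norm_one' {b : ℕ} (h1 : 1 ≤ b) (h2 : b ≤ p - 1) : ‖(b : ℚ_[p])‖ = 1 := by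
  have hplt := hp.out.one_lt
  have hnd : ¬ ((p:ℤ) ∣ (b:ℤ)) := by
    rw [Int.natCast_dvd_natCast]
    intro hdvd
    have := Nat.le_of_dvd h1 hdvd
    omega
  have hle : ‖((b:ℤ) : ℚ_[p])‖ ≤ 1 := Padic.norm_int_le_one _
  have hlt : ¬ ‖((b:ℤ) : ℚ_[p])‖ < 1 := fun h =>
    hnd ((Padic.norm_intCast_lt_one_iff).mp h)
  push_cast at hle hlt ⊢
  linarith [lt_or_eq_of_le hle]

lemma schneider_unit_norm {x : ℚ_[p]} (hx : x ≠ 0) :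
    ‖(p : ℚ_[p]) ^ x.valuation / x‖ = 1 := by
  rw [norm_div, Padic.norm_p_zpow, ← Padic.norm_eq_zpow_neg_valuation hx, div_self]
  exact norm_ne_zero_iff.mpr hx

lemma schneiderDigit_exists {x : ℚ_[p]} (hx : x ≠ 0) :
    ∃ b : ℕ, 1 ≤ b ∧ b ≤ p - 1 ∧
      ‖(p : ℚ_[p]) ^ x.valuation / x - (b : ℚ_[p])‖ < 1 := by
  have hplt := hp.out.one_lt
  set u : ℚ_[p] := (p : ℚ_[p]) ^ x.valuation / x with hu
  have hnu : ‖u‖ = 1 := schneider_unit_norm p hx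
  set U : ℤ_[p] := ⟨u, hnu.le⟩ with hU
  set b : ℕ := U.appr 1 with hb
  have hspec := PadicInt.appr_spec 1 U
  rw [Ideal.mem_span_singleton] at hspec
  obtain ⟨c, hc⟩ := hspec
  have hnormc : ‖U - (b : ℤ_[p])‖ < 1 := by
    rw [hc]
    calc ‖(p:ℤ_[p])^1 * c‖ ≤ ‖(p:ℤ_[p])^1‖ * ‖c‖ := norm_mul_le _ _
      _ ≤ ‖(p:ℤ_[p])‖ * 1 := by
          rw [pow_one]
          exact mul_le_mul le_rfl (PadicInt.norm_le_one c) (norm_nonneg c) (norm_nonneg _)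
      _ = ‖(p:ℤ_[p])‖ := mul_one _
      _ < 1 := by rw [PadicInt.norm_p]; rw [inv_lt_one_iff₀]; right; exact_mod_cast hplt
  have hnormq : ‖u - (b : ℚ_[p])‖ < 1 := by
    have : ‖U - (b:ℤ_[p])‖ = ‖u - (b:ℚ_[p])‖ := by
      rw [PadicInt.norm_def]; push_cast; rfl
    rwa [this] at hnormc
  have hblt : b < p := by have := PadicInt.appr_lt U 1; simpa using this
  have hb1 : 1 ≤ b := by
    by_contra h
    have hb0 : b = 0 := by omega
    rw [hb0] at hnormq
    simp only [Nat.cast_zero, sub_zero] at hnormq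
    rw [hnu] at hnormq
    linarith
  exact ⟨b, hb1, by omega, hnormq⟩

lemma schneiderDigit_spec {x : ℚ_[p]} (hx : x ≠ 0) :
    1 ≤ schneiderDigit p x ∧ schneiderDigit p x ≤ p - 1 ∧
      ‖(p : ℚ_[p]) ^ x.valuation / x - (schneiderDigit p x : ℚ_[p])‖ < 1 := by
  have hex := schneiderDigit_exists p hx
  rw [schneiderDigit, dif_pos hex]
  exact hex.choose_spec

lemma schneiderDigit_norm_one {x : ℚ_[p]} (hx : x ≠ 0) :
    ‖(schneiderDigit p x : ℚ_[p])‖ = 1 := by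
  obtain ⟨h1, h2, _⟩ := schneiderDigit_spec p hx
  exact natCast_norm_one' p h1 h2

lemma schneiderMap_def {x : ℚ_[p]} (hx : x ≠ 0) :
    schneiderMap p x = (p:ℚ_[p]) ^ x.valuation / x - (schneiderDigit p x : ℚ_[p]) :=
  if_neg hx

lemma norm_schneiderMap_lt (x : ℚ_[p]) : ‖schneiderMap p x‖ < 1 := by
  by_cases hx : x = 0
  · simp [schneiderMap, hx]
  · rw [schneiderMap_def p hx]; exact (schneiderDigit_spec p hx).2.2

lemma digit_add_map {x : ℚ_[p]} (hx : x ≠ 0) :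
    (schneiderDigit p x : ℚ_[p]) + schneiderMap p x = (p:ℚ_[p]) ^ x.valuation / x := by
  rw [schneiderMap_def p hx]; ring

lemma schneiderDigit_zero : schneiderDigit p (0 : ℚ_[p]) = 0 := by
  rw [schneiderDigit, dif_neg]
  rintro ⟨b, hb1, hb2, hb3⟩
  rw [div_zero, zero_sub, norm_neg, natCast_norm_one' p hb1 hb2] at hb3
  linarith

lemma schneiderConv_zero_eq (n : ℕ) : schneiderConv p n (0 : ℚ_[p]) = 0 := by
  induction n with
  | zero => rfl
  | succ n ih =>
    rw [schneiderConv]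
    simp [schneiderMap, schneiderDigit_zero, ih]

lemma norm_p_zpow_val {z : ℚ_[p]} (hz : z ≠ 0) :
    ‖(p:ℚ_[p]) ^ z.valuation‖ = ‖z‖ := by
  rw [Padic.norm_p_zpow]
  exact (Padic.norm_eq_zpow_neg_valuation hz).symm

lemma norm_schneiderConv_lt : ∀ (n : ℕ) (z : ℚ_[p]), ‖z‖ < 1 → ‖schneiderConv p n z‖ < 1 := by
  intro n
  induction n with
  | zero => intro z _; simp [schneiderConv]
  | succ n ih =>
    intro z hz
    by_cases h0 : z = 0
    · rw [h0, schneiderConv_zero_eq]; simpa using hz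
    · rw [schneiderConv]
      have hb := schneiderDigit_norm_one p h0
      have hc : ‖schneiderConv p n (schneiderMap p z)‖ < 1 :=
        ih _ (norm_schneiderMap_lt p z)
      have hden : ‖(schneiderDigit p z : ℚ_[p]) + schneiderConv p n (schneiderMap p z)‖ = 1 := by
        rw [Padic.add_eq_max_of_ne (by rw [hb]; exact (ne_of_lt hc).symm), hb]
        exact max_eq_left hc.le
      rw [norm_div, hden, div_one, norm_p_zpow_val p h0]
      exact hz

lemma norm_sub_conv_succ {z : ℚ_[p]} (hz0 : z ≠ 0) (n : ℕ) :
    ‖z - schneiderConv p (n+1) z‖ =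
      ‖z‖ * ‖schneiderMap p z - schneiderConv p n (schneiderMap p z)‖ := by
  set b : ℚ_[p] := (schneiderDigit p z : ℚ_[p]) with hbdef
  set t : ℚ_[p] := schneiderMap p z with htdef
  set c : ℚ_[p] := schneiderConv p n t with hcdef
  set P : ℚ_[p] := (p:ℚ_[p]) ^ z.valuation with hPdef
  have hbt : b + t = P / z := digit_add_map p hz0
  have hbtn : ‖b + t‖ = 1 := by rw [hbt]; exact schneider_unit_norm p hz0
  have hb1 : ‖b‖ = 1 := schneiderDigit_norm_one p hz0
  have hc1 : ‖c‖ < 1 := norm_schneiderConv_lt p n t (norm_schneiderMap_lt p z)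
  have hbc : ‖b + c‖ = 1 := by
    rw [Padic.add_eq_max_of_ne (by rw [hb1]; exact (ne_of_lt hc1).symm), hb1]
    exact max_eq_left hc1.le
  have hP : ‖P‖ = ‖z‖ := norm_p_zpow_val p hz0
  have hbt0 : b + t ≠ 0 := by
    intro h; rw [h, norm_zero] at hbtn; exact one_ne_zero hbtn.symm
  have hbc0 : b + c ≠ 0 := by
    intro h; rw [h, norm_zero] at hbc; exact one_ne_zero hbc.symm
  have hP0 : P ≠ 0 := by
    rw [← norm_ne_zero_iff, hP, norm_ne_zero_iff]; exact hz0
  have hzeq : z = P / (b + t) := by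
    rw [hbt]
    field_simp
  have hconv : schneiderConv p (n+1) z = P / (b + c) := by
    rw [schneiderConv]
  have key : z - P / (b + c) = P * (c - t) / ((b + t) * (b + c)) := by
    rw [hzeq]
    field_simp
    ring
  rw [hconv, key, norm_div, norm_mul, norm_mul, hbtn, hbc, hP, norm_sub_rev, mul_one,
    div_one]

end Aux

/-- For `x ∈ pℤ_p \ F`, the Birkhoff sums of `log φ`
telescope: `Σ_{k<n} log φ(T_p^k x) = −log‖x − p_{n+1}/q_{n+1}‖ + log‖x − p₁/q₁‖`;
consequently `lim (1/n) Σ_{k<n} log φ(T_p^k x) = −lim (1/n) log‖x − p_n/q_n‖`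
whenever either limit exists. -/
theorem birkhoff_telescoping (p : ℕ) [Fact p.Prime] (x : ℚ_[p])
    (hx1 : ‖x‖ < 1) (hF : ∀ k : ℕ, (schneiderMap p)^[k] x ≠ 0) :
    (∀ n : ℕ,
      ∑ k ∈ Finset.range n, Real.log (schneiderPhiConv p ((schneiderMap p)^[k] x))
        = -Real.log ‖x - schneiderConv p (n + 1) x‖
          + Real.log ‖x - schneiderConv p 1 x‖) ∧
    ∀ L : ℝ,
      (Filter.Tendsto
          (fun n : ℕ => (1 / (n : ℝ)) *
            ∑ k ∈ Finset.range n, Real.log (schneiderPhiConv p ((schneiderMap p)^[k] x)))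
          Filter.atTop (nhds L)
        ↔ Filter.Tendsto
            (fun n : ℕ => -((1 / (n : ℝ)) * Real.log ‖x - schneiderConv p n x‖))
            Filter.atTop (nhds L)) := by
  set y : ℕ → ℚ_[p] := fun k => (schneiderMap p)^[k] x with hy
  have hy0 : y 0 = x := rfl
  have hysucc : ∀ k, y (k+1) = schneiderMap p (y k) := fun k =>
    Function.iterate_succ_apply' _ _ _
  have hyne : ∀ k, y k ≠ 0 := hF
  -- product formula
  have hprod : ∀ k m, ‖x - schneiderConv p (k + m) x‖ =
      (∏ j ∈ Finset.range k, ‖y j‖) * ‖y k - schneiderConv p m (y k)‖ := by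
    intro k
    induction k with
    | zero => intro m; simp [hy0]
    | succ k ih =>
      intro m
      have h1 : k + 1 + m = k + (m + 1) := by ring
      rw [h1, ih (m+1), norm_sub_conv_succ p (hyne k) m,
          Finset.prod_range_succ, ← hysucc]
      ring
  have hPpos : ∀ k, (0:ℝ) < ∏ j ∈ Finset.range k, ‖y j‖ := fun k =>
    Finset.prod_pos fun j _ => norm_pos_iff.mpr (hyne j)
  set a : ℕ → ℝ := fun m => ‖x - schneiderConv p m x‖ with ha
  have hapos : ∀ m, 0 < a m := by
    intro m
    have h := hprod m 0
    simp only [Nat.add_zero] at h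
    show 0 < ‖x - schneiderConv p m x‖
    rw [h]
    have h2 : ‖y m - schneiderConv p 0 (y m)‖ = ‖y m‖ := by
      simp [schneiderConv]
    rw [h2]
    exact mul_pos (hPpos m) (norm_pos_iff.mpr (hyne m))
  have hAm : ∀ k m, (0:ℝ) < ‖y k - schneiderConv p m (y k)‖ := by
    intro k m
    rcases (norm_nonneg (y k - schneiderConv p m (y k))).lt_or_eq with h | h
    · exact h
    · exfalso
      have h3 := hapos (k + m)
      show False
      have := hprod k m
      rw [← h, mul_zero] at this
      exact absurd this (ne_of_gt h3)
  have hlog : ∀ k, Real.log (schneiderPhiConv p (y k)) =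
      Real.log (a (k+1)) - Real.log (a (k+2)) := by
    intro k
    have h1 := hprod k 1
    have h2 := hprod k 2
    have hA1 := hAm k 1
    have hA2 := hAm k 2
    have hphi : schneiderPhiConv p (y k) =
        ‖y k - schneiderConv p 1 (y k)‖ / ‖y k - schneiderConv p 2 (y k)‖ := by
      rw [schneiderPhiConv, inv_div_inv]
    have e1 : Real.log (a (k+1)) =
        Real.log (∏ j ∈ Finset.range k, ‖y j‖) + Real.log ‖y k - schneiderConv p 1 (y k)‖ := by
      show Real.log ‖x - schneiderConv p (k+1) x‖ = _
      rw [show k + 1 = k + 1 from rfl, h1, Real.log_mul (hPpos k).ne' hA1.ne']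
    have e2 : Real.log (a (k+2)) =
        Real.log (∏ j ∈ Finset.range k, ‖y j‖) + Real.log ‖y k - schneiderConv p 2 (y k)‖ := by
      show Real.log ‖x - schneiderConv p (k+2) x‖ = _
      rw [show k + 2 = k + 2 from rfl, h2, Real.log_mul (hPpos k).ne' hA2.ne']
    rw [hphi, Real.log_div hA1.ne' hA2.ne', e1, e2]
    ring
  have part1 : ∀ n : ℕ,
      ∑ k ∈ Finset.range n, Real.log (schneiderPhiConv p (y k))
        = -Real.log (a (n+1)) + Real.log (a 1) := by
    intro n
    calc ∑ k ∈ Finset.range n, Real.log (schneiderPhiConv p (y k))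
        = ∑ k ∈ Finset.range n,
            (Real.log (a (k+1)) - Real.log (a (k+1+1))) :=
          Finset.sum_congr rfl fun k _ => hlog k
      _ = Real.log (a (0+1)) - Real.log (a (n+1)) :=
          Finset.sum_range_sub' (fun k => Real.log (a (k+1))) n
      _ = -Real.log (a (n+1)) + Real.log (a 1) := by norm_num; ring
  refine ⟨part1, ?_⟩
  intro L
  -- reduce to shifted statement
  have hsum : ∀ n : ℕ, (1 / (n:ℝ)) *
      ∑ k ∈ Finset.range n, Real.log (schneiderPhiConv p (y k))
      = -((1/(n:ℝ)) * Real.log (a (n+1))) + (1/(n:ℝ)) * Real.log (a 1) := by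
    intro n
    rw [part1 n]
    ring
  have hz : Filter.Tendsto (fun n : ℕ => (1/(n:ℝ)) * Real.log (a 1))
      Filter.atTop (nhds 0) := by
    simpa using tendsto_one_div_atTop_nhds_zero_nat.mul_const (Real.log (a 1))
  set F : ℕ → ℝ := fun n => -((1/(n:ℝ)) * Real.log (a (n+1))) with hFdef
  set G : ℕ → ℝ := fun n => -((1/(n:ℝ)) * Real.log (a n)) with hGdef
  have stepA : Filter.Tendsto (fun n : ℕ => (1 / (n:ℝ)) *
        ∑ k ∈ Finset.range n, Real.log (schneiderPhiConv p (y k)))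
      Filter.atTop (nhds L) ↔ Filter.Tendsto F Filter.atTop (nhds L) := by
    constructor
    · intro h
      have := h.sub hz
      rw [sub_zero] at this
      refine this.congr fun n => ?_
      rw [hsum n]; ring
    · intro h
      have := h.add hz
      rw [add_zero] at this
      refine this.congr fun n => ?_
      rw [hsum n]
  have hfrac1 : Filter.Tendsto (fun n : ℕ => (n:ℝ)/((n:ℝ)+1)) Filter.atTop (nhds 1) := by
    have h0 := tendsto_one_div_add_atTop_nhds_zero_nat (𝕜 := ℝ)
    have := Filter.Tendsto.sub (tendsto_const_nhds (x := (1:ℝ))) h0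
    rw [sub_zero] at this
    refine this.congr fun n => ?_
    have hne : ((n:ℝ)+1) ≠ 0 := by positivity
    field_simp
    ring
  have hfrac2 : Filter.Tendsto (fun n : ℕ => ((n:ℝ)+1)/(n:ℝ)) Filter.atTop (nhds 1) := by
    have h0 := tendsto_one_div_atTop_nhds_zero_nat (𝕜 := ℝ)
    have := Filter.Tendsto.add (tendsto_const_nhds (x := (1:ℝ))) h0
    rw [add_zero] at this
    refine this.congr' ?_
    filter_upwards [Filter.eventually_ge_atTop 1] with n hn
    have hne : (n:ℝ) ≠ 0 := by
      have : (0:ℝ) < n := by exact_mod_cast hn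
      exact this.ne'
    field_simp
  have stepB : Filter.Tendsto F Filter.atTop (nhds L) ↔
      Filter.Tendsto G Filter.atTop (nhds L) := by
    constructor
    · intro h
      rw [← Filter.tendsto_add_atTop_iff_nat 1]
      have hmul := hfrac1.mul h
      rw [one_mul] at hmul
      refine hmul.congr' ?_
      filter_upwards [Filter.eventually_ge_atTop 1] with n hn
      have hne : (n:ℝ) ≠ 0 := by positivity
      have hne1 : ((n:ℝ)+1) ≠ 0 := by positivity
      show (n:ℝ)/((n:ℝ)+1) * F n = G (n+1)
      rw [hFdef, hGdef]
      simp only []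
      push_cast
      field_simp
    · intro h
      have hsh : Filter.Tendsto (fun n : ℕ => G (n+1)) Filter.atTop (nhds L) :=
        (Filter.tendsto_add_atTop_iff_nat 1).mpr h
      have hmul := hfrac2.mul hsh
      rw [one_mul] at hmul
      refine hmul.congr' ?_
      filter_upwards [Filter.eventually_ge_atTop 1] with n hn
      have hne : (n:ℝ) ≠ 0 := by positivity
      have hne1 : ((n:ℝ)+1) ≠ 0 := by positivity
      show ((n:ℝ)+1)/(n:ℝ) * G (n+1) = F n
      rw [hFdef, hGdef]
      simp only []
      push_cast
      field_simp
  exact stepA.trans stepB
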